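/- The Cayley stability of the cyclic group ℤ₃ is 9; that is, any two distinct group structures on a 3-element set differ at all 9 pairs, and there exist two distinct group structures on a 3-element set. -/
import Mathlib

section Aux
set_option linter.unusedSectionVars false

variable {G : Type*} [Fintype G] [DecidableEq G]

/-- In a 3-element type, any two elements avoiding a fixed 2-element set are equal. -/
lemma third_unique (hcard : Fintype.card G = 3) (a b u v : G) (hab : a ≠ b)
    (hua : u ≠ a) (hub : u ≠ b) (hva : v ≠ a) (hvb : v ≠ b) : u = v := by
  have h2 : ({a, b} : Finset G).card = 2 := by
    rw [Finset.card_insert_of_notMem (by simpa using hab), Finset.card_singleton]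
  have hc : (Finset.univ \ {a, b}).card = 1 := by
    rw [Finset.card_sdiff_of_subset (Finset.subset_univ _), Finset.card_univ, hcard, h2]
  have hu : u ∈ Finset.univ \ ({a, b} : Finset G) := by simp [hua, hub]
  have hv : v ∈ Finset.univ \ ({a, b} : Finset G) := by simp [hva, hvb]
  obtain ⟨w, hw⟩ := Finset.card_eq_one.mp hc
  rw [hw, Finset.mem_singleton] at hu hv
  rw [hu, hv]

section OneGroup

variable [Group G]

lemma cube_eq_one (hcard : Fintype.card G = 3) (x : G) : x * x * x = 1 := by
  have h := pow_card_eq_one (x := x)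
  rw [hcard] at h
  simpa [pow_succ, mul_assoc] using h

lemma sq_ne (hcard : Fintype.card G = 3) (x : G) (hx : x ≠ 1) :
    x * x ≠ 1 ∧ x * x ≠ x := by
  constructor
  · intro h
    apply hx
    have h3 := cube_eq_one hcard x
    rw [h, one_mul] at h3
    exact h3
  · intro h
    apply hx
    have : x * x = x * 1 := by rw [h, mul_one]
    exact mul_left_cancel this

lemma mul_eq_one_of_ne (hcard : Fintype.card G = 3) (x y : G) (hx : x ≠ 1) (hy : y ≠ 1)
    (hxy : x ≠ y) : x * y = 1 := by
  obtain ⟨h1, h2⟩ := sq_ne hcard x hx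
  have hcards : ({1, x, x * x} : Finset G).card = 3 := by
    rw [Finset.card_insert_of_notMem (by simp [Ne.symm hx, Ne.symm h1]),
      Finset.card_insert_of_notMem (by simpa using Ne.symm h2), Finset.card_singleton]
  have huniv : ({1, x, x * x} : Finset G) = Finset.univ :=
    Finset.eq_univ_of_card _ (by rw [hcards, hcard])
  have hy' : y ∈ ({1, x, x * x} : Finset G) := huniv ▸ Finset.mem_univ y
  simp only [Finset.mem_insert, Finset.mem_singleton] at hy'
  rcases hy' with h | h | h
  · exact absurd h hy
  · exact absurd h (Ne.symm hxy)
  · rw [h, ← mul_assoc]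
    exact cube_eq_one hcard x

end OneGroup

-- Versions phrased for an explicit group structure `s`.

lemma smul_one_left (s : Group G) (x : G) : s.mul s.one x = x := by
  letI := s; exact one_mul x

lemma smul_one_right (s : Group G) (x : G) : s.mul x s.one = x := by
  letI := s; exact mul_one x

lemma sone_of_mul_right (s : Group G) (x y : G) (h : s.mul x y = y) : x = s.one := by
  letI := s
  have : x * y = (1 : G) * y := by rw [one_mul]; exact h
  exact mul_right_cancel this

lemma sone_of_mul_left (s : Group G) (x y : G) (h : s.mul x y = x) : y = s.one := by
  letI := s
  have : x * y = x * (1 : G) := by rw [mul_one]; exact h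
  exact mul_left_cancel this

lemma ssq_ne (hcard : Fintype.card G = 3) (s : Group G) (x : G) (hx : x ≠ s.one) :
    s.mul x x ≠ s.one ∧ s.mul x x ≠ x := by
  letI := s; exact sq_ne hcard x hx

lemma smul_eq_one (hcard : Fintype.card G = 3) (s : Group G) (x y : G) (hx : x ≠ s.one)
    (hy : y ≠ s.one) (hxy : x ≠ y) : s.mul x y = s.one := by
  letI := s; exact mul_eq_one_of_ne hcard x y hx hy hxy

/-- If two group structures on a 3-element set agree at one point, their identities agree. -/
lemma ones_eq (hcard : Fintype.card G = 3) (s t : Group G) (x y : G)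
    (h : s.mul x y = t.mul x y) : s.one = t.one := by
  by_cases hx1 : x = s.one
  · -- then s.mul x y = y, so t.mul x y = y, so x = t.one
    have hs : s.mul x y = y := by rw [hx1]; exact smul_one_left s y
    have ht : t.mul x y = y := by rw [← h]; exact hs
    rw [← hx1, sone_of_mul_right t x y ht]
  by_cases hy1 : y = s.one
  · have hs : s.mul x y = x := by rw [hy1]; exact smul_one_right s x
    have ht : t.mul x y = x := by rw [← h]; exact hs
    rw [← hy1, sone_of_mul_left t x y ht]
  by_cases hx1' : x = t.one
  · have ht : t.mul x y = y := by rw [hx1']; exact smul_one_left t y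
    have hs : s.mul x y = y := by rw [h]; exact ht
    exact absurd (sone_of_mul_right s x y hs) hx1
  by_cases hy1' : y = t.one
  · have ht : t.mul x y = x := by rw [hy1']; exact smul_one_right t x
    have hs : s.mul x y = x := by rw [h]; exact ht
    exact absurd (sone_of_mul_left s x y hs) hy1
  by_cases hxy : x = y
  · subst hxy
    obtain ⟨hs1, hs2⟩ := ssq_ne hcard s x hx1
    obtain ⟨ht1, ht2⟩ := ssq_ne hcard t x hx1'
    rw [h] at hs1 hs2
    -- s.one and t.one both differ from x and from c := t.mul x x
    exact third_unique hcard x (t.mul x x) s.one t.one (Ne.symm hs2)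
      (Ne.symm hx1) (Ne.symm hs1) (Ne.symm hx1') (Ne.symm ht1)
  · have hs := smul_eq_one hcard s x y hx1 hy1 hxy
    have ht := smul_eq_one hcard t x y hx1' hy1' hxy
    rw [← hs, ← ht, h]

/-- Two group structures with the same identity on a 3-element set coincide. -/
lemma muls_eq (hcard : Fintype.card G = 3) (s t : Group G) (hone : s.one = t.one) :
    s.mul = t.mul := by
  funext a b
  by_cases ha : a = s.one
  · rw [ha, smul_one_left s b, hone, smul_one_left t b]
  by_cases hb : b = s.one
  · rw [hb, smul_one_right s a, hone, smul_one_right t a]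
  have ha' : a ≠ t.one := hone ▸ ha
  have hb' : b ≠ t.one := hone ▸ hb
  by_cases hab : a = b
  · subst hab
    obtain ⟨hs1, hs2⟩ := ssq_ne hcard s a ha
    obtain ⟨ht1, ht2⟩ := ssq_ne hcard t a ha'
    rw [← hone] at ht1
    exact third_unique hcard s.one a (s.mul a a) (t.mul a a) (Ne.symm ha) hs1 hs2 ht1 ht2
  · rw [smul_eq_one hcard s a b ha hb hab, smul_eq_one hcard t a b ha' hb' hab, hone]

end Aux

theorem stability_order_three {G : Type*} [Fintype G] [DecidableEq G]
    (hcard : Fintype.card G = 3) :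
    (∀ s t : Group G, s.mul ≠ t.mul →
        (Finset.univ.filter fun p : G × G => s.mul p.1 p.2 ≠ t.mul p.1 p.2).card = 9) ∧
    ∃ s t : Group G, s.mul ≠ t.mul := by
  constructor
  · intro s t hne
    have key : ∀ p : G × G, p ∈ (Finset.univ : Finset (G × G)) →
        s.mul p.1 p.2 ≠ t.mul p.1 p.2 := by
      intro p _ h
      exact hne (muls_eq hcard s t (ones_eq hcard s t p.1 p.2 h))
    rw [Finset.filter_true_of_mem key, Finset.card_univ, Fintype.card_prod, hcard]
  · have hc : Fintype.card G = Fintype.card (Multiplicative (ZMod 3)) := by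
      simpa using hcard
    let g : G ≃ Multiplicative (ZMod 3) := Fintype.equivOfCardEq hc
    let a : G := g.symm 1
    obtain ⟨b, hb⟩ : ∃ b : G, b ≠ a := Fintype.exists_ne_of_one_lt_card (by omega) a
    refine ⟨Equiv.group g, Equiv.group ((Equiv.swap a b).trans g), ?_⟩
    intro h
    have hone : (Equiv.group g).one = (Equiv.group ((Equiv.swap a b).trans g)).one :=
      ones_eq hcard _ _ a a (by rw [h])
    have h1 : (Equiv.group g).one = a := rfl
    have h2 : (Equiv.group ((Equiv.swap a b).trans g)).one = Equiv.swap a b (g.symm 1) := rfl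
    rw [h1, h2] at hone
    have : Equiv.swap a b a = b := Equiv.swap_apply_left a b
    rw [show g.symm 1 = a from rfl, this] at hone
    exact hb hone.symm
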